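/- Let G be a finite abstract simplicial complex and h : G → ℂ with |h(x)| = 1 for all x ∈ G. For every x ∈ G, the diagonal entry of conj(g)·L at (x,x) equals |h(x)|² = 1; more precisely ∑_{y ∈ G} conj(g(x,y))·L(y,x) = |h(x)|². -/

import Mathlib

open Finset

def IsSimplicialComplex (G : Finset (Finset ℕ)) : Prop :=
  (∀ x ∈ G, x.Nonempty) ∧ ∀ x ∈ G, ∀ y ⊆ x, y.Nonempty → y ∈ G

lemma aux1 (w z : Finset ℕ) (hwz : w ⊆ z) :
    ∑ y ∈ z.powerset.filter (fun y => w ⊆ y), (-1:ℂ)^y.card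
      = if w = z then (-1:ℂ)^z.card else 0 := by
  have himg : z.powerset.filter (fun y => w ⊆ y)
      = (z \ w).powerset.image (fun s => w ∪ s) := by
    ext y
    simp only [mem_filter, mem_powerset, mem_image]
    constructor
    · rintro ⟨hyz, hwy⟩
      exact ⟨y \ w, sdiff_subset_sdiff hyz le_rfl, by rw [union_sdiff_of_subset hwy]⟩
    · rintro ⟨s, hs, rfl⟩
      exact ⟨union_subset hwz (hs.trans sdiff_subset), subset_union_left⟩
  have hinj : ∀ s ∈ (z \ w).powerset, ∀ t ∈ (z \ w).powerset,
      w ∪ s = w ∪ t → s = t := by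
    intro s hs t ht hst
    rw [mem_powerset] at hs ht
    have hsd : Disjoint w s := (sdiff_disjoint.mono_left hs).symm
    have htd : Disjoint w t := (sdiff_disjoint.mono_left ht).symm
    have : (w ∪ s) \ w = (w ∪ t) \ w := by rw [hst]
    rwa [union_sdiff_cancel_left hsd, union_sdiff_cancel_left htd] at this
  rw [himg, Finset.sum_image hinj]
  have hcard : ∀ s ∈ (z \ w).powerset, ((-1:ℂ))^(w ∪ s).card
      = (-1:ℂ)^w.card * (-1:ℂ)^s.card := by
    intro s hs
    rw [mem_powerset] at hs
    have hsd : Disjoint w s := (sdiff_disjoint.mono_left hs).symm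
    rw [card_union_of_disjoint hsd, pow_add]
  rw [Finset.sum_congr rfl hcard, ← Finset.mul_sum]
  have : (∑ s ∈ (z \ w).powerset, (-1:ℂ)^s.card)
      = ((∑ s ∈ (z \ w).powerset, (-1:ℤ)^s.card : ℤ) : ℂ) := by push_cast; rfl
  rw [this, Finset.sum_powerset_neg_one_pow_card]
  by_cases hw : w = z
  · subst hw; simp
  · have : z \ w ≠ ∅ := by
      intro hemp
      exact hw (subset_antisymm hwz (sdiff_eq_empty_iff_subset.mp hemp))
    simp [this, hw]

lemma neg_one_pow_pred (n : ℕ) (hn : 1 ≤ n) : ((-1:ℂ))^(n-1) = -(-1:ℂ)^n := by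
  obtain ⟨m, rfl⟩ := Nat.exists_eq_add_of_le hn
  simp [pow_succ, pow_add]

lemma aux2 (G : Finset (Finset ℕ)) (hG : IsSimplicialComplex G) (w z : Finset ℕ)
    (hz : z ∈ G) (hw : w.Nonempty) (hwz : w ⊆ z) :
    ∑ y ∈ G.filter (fun y => w ⊆ y ∧ y ⊆ z), (-1:ℂ)^(y.card-1)
      = if w = z then (-1:ℂ)^(z.card-1) else 0 := by
  have hset : G.filter (fun y => w ⊆ y ∧ y ⊆ z) = z.powerset.filter (fun y => w ⊆ y) := by
    ext y
    simp only [mem_filter, mem_powerset]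
    constructor
    · rintro ⟨_, h1, h2⟩; exact ⟨h2, h1⟩
    · rintro ⟨h2, h1⟩; exact ⟨hG.2 z hz y h2 (hw.mono h1), h1, h2⟩
  have hcong : ∀ y ∈ z.powerset.filter (fun y => w ⊆ y),
      ((-1:ℂ))^(y.card-1) = -(-1:ℂ)^y.card := by
    intro y hy
    simp only [mem_filter, mem_powerset] at hy
    exact neg_one_pow_pred _ (card_pos.mpr (hw.mono hy.2))
  rw [hset, Finset.sum_congr rfl hcong, Finset.sum_neg_distrib, aux1 w z hwz]
  by_cases hwz' : w = z
  · subst hwz'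
    rw [if_pos rfl, if_pos rfl, neg_one_pow_pred _ (card_pos.mpr hw)]
  · simp [hwz']

theorem stmt5 (G : Finset (Finset ℕ)) (hG : IsSimplicialComplex G)
    (h : Finset ℕ → ℂ) (hu : ∀ x ∈ G, ‖h x‖ = 1)
    (L g : Matrix {x // x ∈ G} {x // x ∈ G} ℂ)
    (hL : L = Matrix.of (fun x y =>
      ∑ z ∈ G.filter (fun z => z ⊆ x.1 ∧ z ⊆ y.1), h z))
    (hg : g = Matrix.of (fun x y =>
      (-1 : ℂ) ^ (x.1.card - 1) * (-1 : ℂ) ^ (y.1.card - 1) *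
        ∑ z ∈ G.filter (fun z => x.1 ⊆ z ∧ y.1 ⊆ z), h z))
    (x : {x // x ∈ G}) :
    ∑ y : {x // x ∈ G}, (starRingEnd ℂ) (g x y) * L y x
      = ((‖h x.1‖) ^ 2 : ℂ) := by
  classical
  subst hL hg
  have hx := x.2
  set c : ℂ := (-1:ℂ)^(x.1.card-1) with hc
  have step1 : ∑ y : {x // x ∈ G}, (starRingEnd ℂ)
        ((Matrix.of (fun x y : {x // x ∈ G} =>
          (-1 : ℂ) ^ (x.1.card - 1) * (-1 : ℂ) ^ (y.1.card - 1) *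
            ∑ z ∈ G.filter (fun z => x.1 ⊆ z ∧ y.1 ⊆ z), h z)) x y) *
        (Matrix.of (fun x y : {x // x ∈ G} =>
          ∑ z ∈ G.filter (fun z => z ⊆ x.1 ∧ z ⊆ y.1), h z)) y x
      = ∑ y ∈ G, c * (-1:ℂ)^(y.card-1) *
          (∑ z ∈ G.filter (fun z => x.1 ⊆ z ∧ y ⊆ z), (starRingEnd ℂ) (h z)) *
          (∑ w ∈ G.filter (fun w => w ⊆ y ∧ w ⊆ x.1), h w) := by
    rw [← Finset.sum_coe_sort G (fun y => c * (-1:ℂ)^(y.card-1) *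
          (∑ z ∈ G.filter (fun z => x.1 ⊆ z ∧ y ⊆ z), (starRingEnd ℂ) (h z)) *
          (∑ w ∈ G.filter (fun w => w ⊆ y ∧ w ⊆ x.1), h w))]
    refine Finset.sum_congr rfl fun y _ => ?_
    simp only [Matrix.of_apply, map_mul, map_sum, map_pow, map_neg, map_one, hc]
    try ring
  rw [step1]
  have step2 : ∀ y ∈ G, c * (-1:ℂ)^(y.card-1) *
          (∑ z ∈ G.filter (fun z => x.1 ⊆ z ∧ y ⊆ z), (starRingEnd ℂ) (h z)) *
          (∑ w ∈ G.filter (fun w => w ⊆ y ∧ w ⊆ x.1), h w)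
      = ∑ z ∈ G, ∑ w ∈ G,
          (if x.1 ⊆ z ∧ w ⊆ x.1 then
            (if w ⊆ y ∧ y ⊆ z then
              (-1:ℂ)^(y.card-1) * (c * (starRingEnd ℂ) (h z) * h w) else 0) else 0) := by
    intro y _
    rw [Finset.sum_filter, Finset.sum_filter, mul_assoc, Finset.sum_mul_sum]
    simp only [Finset.mul_sum]
    refine Finset.sum_congr rfl fun z _ => Finset.sum_congr rfl fun w _ => ?_
    split_ifs <;> first | tauto | ring
  rw [Finset.sum_congr rfl step2, Finset.sum_comm]
  have step3 : ∀ z ∈ G, (∑ y ∈ G, ∑ w ∈ G,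
          (if x.1 ⊆ z ∧ w ⊆ x.1 then
            (if w ⊆ y ∧ y ⊆ z then
              (-1:ℂ)^(y.card-1) * (c * (starRingEnd ℂ) (h z) * h w) else 0) else 0))
      = ∑ w ∈ G, (if x.1 ⊆ z ∧ w ⊆ x.1 then
          (if w = z then (-1:ℂ)^(z.card-1) * (c * (starRingEnd ℂ) (h z) * h w)
            else 0) else 0) := by
    intro z hz
    rw [Finset.sum_comm]
    refine Finset.sum_congr rfl fun w hw => ?_
    by_cases hcond : x.1 ⊆ z ∧ w ⊆ x.1
    · simp only [if_pos hcond]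
      have hwz : w ⊆ z := hcond.2.trans hcond.1
      have : ∑ y ∈ G, (if w ⊆ y ∧ y ⊆ z then
            (-1:ℂ)^(y.card-1) * (c * (starRingEnd ℂ) (h z) * h w) else 0)
          = (∑ y ∈ G.filter (fun y => w ⊆ y ∧ y ⊆ z), (-1:ℂ)^(y.card-1)) *
            (c * (starRingEnd ℂ) (h z) * h w) := by
        rw [Finset.sum_mul, Finset.sum_filter]
      rw [this, aux2 G hG w z hz (hG.1 w hw) hwz]
      split_ifs with hwz' <;> simp
    · simp only [if_neg hcond, Finset.sum_const_zero]
  rw [Finset.sum_congr rfl step3]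
  rw [Finset.sum_eq_single_of_mem x.1 hx (fun z hzG hzx => ?_)]
  · rw [Finset.sum_eq_single_of_mem x.1 hx (fun w hwG hwx => by simp [hwx])]
    rw [if_pos ⟨Finset.Subset.refl _, Finset.Subset.refl _⟩, if_pos rfl]
    have he : (-1:ℂ)^(x.1.card-1) * (c * (starRingEnd ℂ) (h x.1) * h x.1)
        = (((-1:ℂ)^(x.1.card-1))^2) * ((starRingEnd ℂ) (h x.1) * h x.1) := by
      rw [hc]; ring
    have h2 : (((-1:ℂ)^(x.1.card-1))^2) = 1 := by
      rw [← pow_mul, mul_comm, pow_mul]; simp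
    rw [he, h2, one_mul, mul_comm, Complex.mul_conj, ← Complex.sq_norm]
    push_cast
    ring
  · refine Finset.sum_eq_zero fun w hwG => ?_
    by_cases hcond : x.1 ⊆ z ∧ w ⊆ x.1
    · rw [if_pos hcond, if_neg ?_]
      intro hwz'
      exact hzx (subset_antisymm hcond.1 (hwz' ▸ hcond.2)).symm
    · rw [if_neg hcond]
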